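/- The map F_IV(α,β): (x,y) ↦ (yP, xP) with P = 1 + (β−α)/(x−y) satisfies the Yang–Baxter relation on all triples where the relevant denominators are nonzero. -/

import Mathlib

open Function

variable {K : Type*} [Field K]

/-- lift a map on pairs to act on coordinates 1,2 of a triple -/
def lift12 {X : Type*} (f : X × X → X × X) : X × X × X → X × X × X :=
  fun p => ((f (p.1, p.2.1)).1, (f (p.1, p.2.1)).2, p.2.2)

/-- lift to coordinates 1,3 -/
def lift13 {X : Type*} (f : X × X → X × X) : X × X × X → X × X × X :=
  fun p => ((f (p.1, p.2.2)).1, p.2.1, (f (p.1, p.2.2)).2)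

/-- lift to coordinates 2,3 -/
def lift23 {X : Type*} (f : X × X → X × X) : X × X × X → X × X × X :=
  fun p => (p.1, (f (p.2.1, p.2.2)).1, (f (p.2.1, p.2.2)).2)

def FIVMap (a b : K) : K × K → K × K :=
  fun p => (p.2 * (1 + (b - a)/(p.1 - p.2)), p.1 * (1 + (b - a)/(p.1 - p.2)))

theorem yangBaxter_FIV (a1 a2 a3 x y z : K)
    (h1 : (x - y) ≠ 0)
    (h2 : ((lift12 (FIVMap a1 a2) (x, y, z)).1 - (lift12 (FIVMap a1 a2) (x, y, z)).2.2) ≠ 0)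
    (h3 : ((lift13 (FIVMap a1 a3) (lift12 (FIVMap a1 a2) (x, y, z))).2.1 - (lift13 (FIVMap a1 a3) (lift12 (FIVMap a1 a2) (x, y, z))).2.2) ≠ 0)
    (h4 : (y - z) ≠ 0)
    (h5 : ((lift23 (FIVMap a2 a3) (x, y, z)).1 - (lift23 (FIVMap a2 a3) (x, y, z)).2.2) ≠ 0)
    (h6 : ((lift13 (FIVMap a1 a3) (lift23 (FIVMap a2 a3) (x, y, z))).1 - (lift13 (FIVMap a1 a3) (lift23 (FIVMap a2 a3) (x, y, z))).2.1) ≠ 0) :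
    lift23 (FIVMap a2 a3) (lift13 (FIVMap a1 a3) (lift12 (FIVMap a1 a2) (x, y, z))) =
      lift12 (FIVMap a1 a2) (lift13 (FIVMap a1 a3) (lift23 (FIVMap a2 a3) (x, y, z))) := by
  simp only [lift12, lift13, lift23, FIVMap] at *
  have e2 : y * (1 + (a2 - a1) / (x - y)) - z = (y*(x - y + a2 - a1) - z*(x - y)) / (x - y) := by
    rw [eq_div_iff h1]; field_simp; ring
  have hB : (y*(x - y + a2 - a1) - z*(x - y)) ≠ 0 := by
    rw [e2] at h2; exact (div_ne_zero_iff.mp h2).1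
  have e3 : x * (1 + (a2 - a1) / (x - y)) - y * (1 + (a2 - a1) / (x - y)) * (1 + (a3 - a1) / (y * (1 + (a2 - a1) / (x - y)) - z)) = (x - y + a2 - a1) * (x*(y*(x - y + a2 - a1) - z*(x - y)) - y*((y*(x - y + a2 - a1) - z*(x - y)) + (a3 - a1)*(x - y))) / ((x - y) * (y*(x - y + a2 - a1) - z*(x - y))) := by
    rw [e2]; generalize y*(x - y + a2 - a1) - z*(x - y) = B at hB ⊢; field_simp; ring
  have hAD : (x - y + a2 - a1) * (x*(y*(x - y + a2 - a1) - z*(x - y)) - y*((y*(x - y + a2 - a1) - z*(x - y)) + (a3 - a1)*(x - y))) ≠ 0 := by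
    rw [e3] at h3; exact (div_ne_zero_iff.mp h3).1
  have hA : (x - y + a2 - a1) ≠ 0 := fun h => hAD (by rw [h]; ring)
  have hD : (x*(y*(x - y + a2 - a1) - z*(x - y)) - y*((y*(x - y + a2 - a1) - z*(x - y)) + (a3 - a1)*(x - y))) ≠ 0 := fun h => hAD (by rw [h]; ring)
  have e5 : x - y * (1 + (a3 - a2) / (y - z)) = (x*(y - z) - y*(y - z + a3 - a2)) / (y - z) := by
    rw [eq_div_iff h4]; field_simp; ring
  have hBp : (x*(y - z) - y*(y - z + a3 - a2)) ≠ 0 := by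
    rw [e5] at h5; exact (div_ne_zero_iff.mp h5).1
  have e6 : y * (1 + (a3 - a2) / (y - z)) * (1 + (a3 - a1) / (x - y * (1 + (a3 - a2) / (y - z)))) - z * (1 + (a3 - a2) / (y - z)) = (y - z + a3 - a2) * (y*((x*(y - z) - y*(y - z + a3 - a2)) + (a3 - a1)*(y - z)) - z*(x*(y - z) - y*(y - z + a3 - a2))) / ((y - z) * (x*(y - z) - y*(y - z + a3 - a2))) := by
    rw [e5]; generalize x*(y - z) - y*(y - z + a3 - a2) = B at hBp ⊢; field_simp; ring
  have hApDp : (y - z + a3 - a2) * (y*((x*(y - z) - y*(y - z + a3 - a2)) + (a3 - a1)*(y - z)) - z*(x*(y - z) - y*(y - z + a3 - a2))) ≠ 0 := by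
    rw [e6] at h6; exact (div_ne_zero_iff.mp h6).1
  have hAp : (y - z + a3 - a2) ≠ 0 := fun h => hApDp (by rw [h]; ring)
  have hDp : (y*((x*(y - z) - y*(y - z + a3 - a2)) + (a3 - a1)*(y - z)) - z*(x*(y - z) - y*(y - z + a3 - a2))) ≠ 0 := fun h => hApDp (by rw [h]; ring)
  have r1 : ((y*(x - y + a2 - a1) - z*(x - y)) + (a3 - a1)*(x - y)) * ((y - z) * (y*((x*(y - z) - y*(y - z + a3 - a2)) + (a3 - a1)*(y - z)) - z*(x*(y - z) - y*(y - z + a3 - a2)))) = ((y - z + a3 - a2)*(y*((x*(y - z) - y*(y - z + a3 - a2)) + (a3 - a1)*(y - z)) - z*(x*(y - z) - y*(y - z + a3 - a2))) + (a2 - a1)*(y - z)*(x*(y - z) - y*(y - z + a3 - a2))) * (y*(x - y + a2 - a1) - z*(x - y)) := by ring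
  have r3 : ((x - y + a2 - a1)*(x*(y*(x - y + a2 - a1) - z*(x - y)) - y*((y*(x - y + a2 - a1) - z*(x - y)) + (a3 - a1)*(x - y))) + (a3 - a2)*(x - y)*(y*(x - y + a2 - a1) - z*(x - y))) * (x*(y - z) - y*(y - z + a3 - a2)) = ((x*(y - z) - y*(y - z + a3 - a2)) + (a3 - a1)*(y - z)) * ((x - y) * (x*(y*(x - y + a2 - a1) - z*(x - y)) - y*((y*(x - y + a2 - a1) - z*(x - y)) + (a3 - a1)*(x - y)))) := by ring
  set nn := x - y with hnn
  set aa := nn + a2 - a1 with haa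
  set bb := y*aa - z*nn with hbb
  set cc := bb + (a3 - a1)*nn with hcc
  set dd := x*bb - y*cc with hdd
  set ee := aa*dd + (a3 - a2)*nn*bb with hee
  set mm := y - z with hmm
  set a2' := mm + a3 - a2 with ha2'
  set b2' := x*mm - y*a2' with hb2'
  set c2' := b2' + (a3 - a1)*mm with hc2'
  set d2' := y*c2' - z*b2' with hd2'
  set e2' := a2'*d2' + (a2 - a1)*mm*b2' with he2'
  have cP1 : (1 + (a2 - a1) / nn) = aa/nn := by rw [one_add_div h1, haa]; try ring
  have cP2 : (1 + (a3 - a1) / (y * (1 + (a2 - a1) / nn) - z)) = cc/bb := by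
    rw [e2, div_div_eq_mul_div, one_add_div hB, hcc]; try ring
  have cP3 : (1 + (a3 - a2) / (x * (1 + (a2 - a1) / nn) - y * (1 + (a2 - a1) / nn) * (1 + (a3 - a1) / (y * (1 + (a2 - a1) / nn) - z)))) = ee/(aa*dd) := by
    rw [e3, div_div_eq_mul_div, one_add_div hAD, hee]; try ring
  have cQ1 : (1 + (a3 - a2) / mm) = a2'/mm := by rw [one_add_div h4, ha2']; try ring
  have cQ2 : (1 + (a3 - a1) / (x - y * (1 + (a3 - a2) / mm))) = c2'/b2' := by
    rw [e5, div_div_eq_mul_div, one_add_div hBp, hc2']; try ring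
  have cQ3 : (1 + (a2 - a1) / (y * (1 + (a3 - a2) / mm) * (1 + (a3 - a1) / (x - y * (1 + (a3 - a2) / mm))) - z * (1 + (a3 - a2) / mm))) = e2'/(a2'*d2') := by
    rw [e6, div_div_eq_mul_div, one_add_div hApDp, he2']; try ring
  clear_value nn aa bb cc dd ee mm a2' b2' c2' d2' e2'
  rw [cP3, cQ3, cP2, cQ2, cP1, cQ1]
  refine Prod.ext ?_ (Prod.ext ?_ ?_)
  · show z * (cc/bb) = z * (a2'/mm) * (e2'/(a2'*d2'))
    field_simp
    linear_combination z * r1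
  · show y * (aa/nn) * (cc/bb) * (ee/(aa*dd)) = y * (a2'/mm) * (c2'/b2') * (e2'/(a2'*d2'))
    field_simp
    linear_combination (y*ee*b2')*r1 + (y*e2'*bb)*r3
  · show x * (aa/nn) * (ee/(aa*dd)) = x * (c2'/b2')
    field_simp
    linear_combination x * r3
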